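/- There exist a natural number N and a polynomial function u : (Fin n → ℝ) × ℝ → ℝ (given by a multivariate polynomial in the n+1 variables (y, x)) such that for every continuous compactly supported function f : (Fin n → ℝ) × ℝ → ℂ and every constant C ≥ 0 satisfying |u(y,x)| · ‖f(y,x)‖ ≤ C for all (y,x) ∈ (Fin n → ℝ) × ℝ, one has ∫⁻_{y ∈ Y₀} ‖(∏ i, |y i| ^ (r i)) · f(y, (p y)⁻¹)‖ dy ≤ C (an inequality of extended-real Lebesgue integrals). (This is the key estimate in the proof of the paper's Lemma 6.2: the distribution i_*(|ω|) attached to the monomial data is a Schwartz distribution.) -/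

import Mathlib

open MeasureTheory Real

/-- Key estimate in the proof of Lemma 6.2: there are `N : ℕ` and a polynomial `u` in the
`n+1` variables `(y, x)` such that the monomial density pushed forward under
`y ↦ (y, p(y)⁻¹)` is bounded against test functions dominated by `C / |u|`. -/
theorem stmt_0 (n : ℕ) (l : Fin n → ℕ) (r : Fin n → ℤ)
    (hlr : ∀ i, l i = 0 → 0 ≤ r i) :
    ∃ (N : ℕ) (u : MvPolynomial (Fin (n + 1)) ℝ),
      ∀ f : (Fin n → ℝ) × ℝ → ℂ, Continuous f → HasCompactSupport f →
        ∀ C : ℝ, 0 ≤ C →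
          (∀ yx : (Fin n → ℝ) × ℝ,
            |MvPolynomial.eval (Fin.snoc yx.1 yx.2) u| * ‖f yx‖ ≤ C) →
          (∫⁻ y in {y : Fin n → ℝ | (∏ i, y i ^ l i) ≠ 0},
              (‖(∏ i, |y i| ^ r i) • f (y, (∏ i, y i ^ l i)⁻¹)‖₊ : ENNReal))
            ≤ ENNReal.ofReal C := by
  classical
  have hπ : (0:ℝ) < π := Real.pi_pos
  set N : ℕ := Finset.univ.sup (fun i => (-r i).toNat) with hNdef
  have haz : ∀ i, 0 ≤ r i + (N:ℤ) * l i := by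
    intro i
    rcases Nat.eq_zero_or_pos (l i) with h | h
    · simpa [h] using hlr i h
    · have h1 : (-r i).toNat ≤ N := Finset.le_sup (f := fun i => (-r i).toNat) (Finset.mem_univ i)
      have h2 : -r i ≤ (N:ℤ) := le_trans (Int.self_le_toNat _) (by exact_mod_cast h1)
      have h3 : (N:ℤ) ≤ (N:ℤ) * l i :=
        le_mul_of_one_le_right (by positivity) (by exact_mod_cast h)
      linarith
  set a : Fin n → ℕ := fun i => (r i + N * l i).toNat with hadef
  have haz' : ∀ i, (a i : ℤ) = r i + N * l i := fun i => Int.toNat_of_nonneg (haz i)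
  refine ⟨N, MvPolynomial.C (π ^ n) *
      (∏ i : Fin n, ((1 + MvPolynomial.X (Fin.castSucc i) ^ 2) *
        MvPolynomial.X (Fin.castSucc i) ^ a i)) *
      MvPolynomial.X (Fin.last n) ^ N, ?_⟩
  intro f hf hfc C hC hbound
  -- the dominating function
  set g : ℝ → ℝ := fun t => (π * (1 + t ^ 2))⁻¹ with hgdef
  have hg_pos : ∀ t, 0 < g t := by
    intro t; rw [hgdef]; positivity
  have hg_int : Integrable g := by
    have : Integrable (fun t : ℝ => π⁻¹ * (1 + t ^ 2)⁻¹) :=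
      integrable_inv_one_add_sq.const_mul π⁻¹
    simpa [hgdef, mul_inv, mul_comm] using this
  have hg_integral : ∫ t, g t = 1 := by
    have : ∫ t, g t = π⁻¹ * ∫ t : ℝ, (1 + t ^ 2)⁻¹ := by
      rw [← integral_const_mul]; simp [hgdef, mul_inv, mul_comm]
    rw [this, integral_univ_inv_one_add_sq, inv_mul_cancel₀ hπ.ne']
  set G : (Fin n → ℝ) → ℝ := fun y => C * ∏ i, g (y i) with hGdef
  have hG_int : Integrable G := (Integrable.fintype_prod (fun _ : Fin n => hg_int)).const_mul C
  have hG_integral : ∫ y, G y = C := by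
    rw [hGdef]
    simp only [integral_const_mul]
    rw [MeasureTheory.integral_fintype_prod_volume_eq_prod (ι := Fin n) (fun _ => g)]
    simp [hg_integral]
  have hG_nonneg : ∀ y, 0 ≤ G y := by
    intro y
    exact mul_nonneg hC (Finset.prod_nonneg fun i _ => (hg_pos _).le)
  -- measurable set
  have hpcont : Continuous (fun y : Fin n → ℝ => ∏ i, y i ^ l i) := by
    exact continuous_finset_prod _ fun i _ => (continuous_apply i).pow _
  have hS : MeasurableSet {y : Fin n → ℝ | (∏ i, y i ^ l i) ≠ 0} := by
    exact (hpcont.measurable (measurableSet_singleton 0)).compl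
  -- pointwise bound on the set
  have hpt : ∀ y ∈ {y : Fin n → ℝ | (∏ i, y i ^ l i) ≠ 0},
      (‖(∏ i, |y i| ^ r i) • f (y, (∏ i, y i ^ l i)⁻¹)‖₊ : ENNReal) ≤
        ENNReal.ofReal (G y) := by
    intro y hy
    have hy' : ∀ i, y i ^ l i ≠ 0 := by
      intro i
      exact fun h => hy (Finset.prod_eq_zero (Finset.mem_univ i) h)
    set x : ℝ := (∏ i, y i ^ l i)⁻¹ with hxdef
    have hb := hbound (y, x)
    have heval : MvPolynomial.eval (Fin.snoc y x)
        (MvPolynomial.C (π ^ n) *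
          (∏ i : Fin n, ((1 + MvPolynomial.X (Fin.castSucc i) ^ 2) *
            MvPolynomial.X (Fin.castSucc i) ^ a i)) *
          MvPolynomial.X (Fin.last n) ^ N)
        = π ^ n * (∏ i, ((1 + (y i) ^ 2) * (y i) ^ a i)) * x ^ N := by
      simp [MvPolynomial.eval_prod]
    -- |x|^N as a product
    have habs : |∏ i, y i ^ l i| = ∏ i, |y i| ^ l i := by
      rw [Finset.abs_prod]; simp [abs_pow]
    have hxabs : |x| ^ N = ∏ i, (|y i| ^ (l i * N))⁻¹ := by
      rw [hxdef, abs_inv, habs, inv_pow, ← Finset.prod_pow, ← Finset.prod_inv_distrib]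
      simp [pow_mul]
    have hr : (∏ i, |y i| ^ a i) * |x| ^ N = ∏ i, |y i| ^ r i := by
      rw [hxabs, ← Finset.prod_mul_distrib]
      refine Finset.prod_congr rfl fun i _ => ?_
      rcases Nat.eq_zero_or_pos (l i) with h | h
      · have hai : (a i : ℤ) = r i := by rw [haz' i, h]; simp
        rw [h, ← zpow_natCast |y i| (a i), hai]
        simp
      · have hy0 : y i ≠ 0 := by
          intro h0; exact hy' i (by simp [h0, zero_pow h.ne'])
        have h0 : |y i| ≠ 0 := abs_ne_zero.mpr hy0
        rw [← zpow_natCast |y i| (a i), ← zpow_natCast |y i| (l i * N), ← zpow_neg,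
          ← zpow_add₀ h0]
        congr 1
        rw [haz' i]; push_cast; ring
    have hkey : |π ^ n * (∏ i, ((1 + (y i) ^ 2) * (y i) ^ a i)) * x ^ N|
        = (∏ i, (π * (1 + (y i) ^ 2))) * ∏ i, |y i| ^ r i := by
      rw [← hr, abs_mul, abs_mul, abs_pow, abs_pow, Finset.abs_prod, abs_of_pos hπ]
      simp only [abs_mul, abs_pow]
      rw [Finset.prod_mul_distrib, Finset.prod_mul_distrib, Finset.prod_const]
      have h2 : ∀ i ∈ Finset.univ, |1 + (y i) ^ 2| = 1 + (y i) ^ 2 :=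
        fun i _ => abs_of_pos (by positivity)
      rw [Finset.prod_congr rfl h2, Finset.card_univ, Fintype.card_fin]
      ring
    rw [heval, hkey] at hb
    have hP : (0:ℝ) ≤ ∏ i, |y i| ^ r i :=
      Finset.prod_nonneg fun i _ => zpow_nonneg (abs_nonneg _) _
    have hQ : (0:ℝ) < ∏ i, (π * (1 + (y i) ^ 2)) :=
      Finset.prod_pos fun i _ => by positivity
    have hnorm : ‖(∏ i, |y i| ^ r i) • f (y, x)‖ = (∏ i, |y i| ^ r i) * ‖f (y, x)‖ := by
      rw [norm_smul, Real.norm_eq_abs, abs_of_nonneg hP]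
    have hGy : G y = C / ∏ i, (π * (1 + (y i) ^ 2)) := by
      rw [hGdef, div_eq_mul_inv, ← Finset.prod_inv_distrib]
    rw [← enorm_eq_nnnorm, ← ofReal_norm]
    apply ENNReal.ofReal_le_ofReal
    rw [hnorm, hGy, le_div_iff₀ hQ]
    calc (∏ i, |y i| ^ r i) * ‖f (y, x)‖ * ∏ i, (π * (1 + (y i) ^ 2))
        = (∏ i, (π * (1 + (y i) ^ 2))) * (∏ i, |y i| ^ r i) * ‖f (y, x)‖ := by ring
      _ ≤ C := hb
  calc ∫⁻ y in {y : Fin n → ℝ | (∏ i, y i ^ l i) ≠ 0},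
        (‖(∏ i, |y i| ^ r i) • f (y, (∏ i, y i ^ l i)⁻¹)‖₊ : ENNReal)
      ≤ ∫⁻ y in {y : Fin n → ℝ | (∏ i, y i ^ l i) ≠ 0}, ENNReal.ofReal (G y) :=
        setLIntegral_mono' hS hpt
    _ ≤ ∫⁻ y, ENNReal.ofReal (G y) := setLIntegral_le_lintegral _ _
    _ = ENNReal.ofReal (∫ y, G y) :=
        (ofReal_integral_eq_lintegral_ofReal hG_int (Filter.Eventually.of_forall hG_nonneg)).symm
    _ = ENNReal.ofReal C := by rw [hG_integral]
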